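/- Let R₀ be a commutative ring with 2 invertible, R = R₀[x₁₂,…,x₃₄], and A the generic 4×4 skew-symmetric matrix. Then the radical of the ideal generated by the 4-minor (the determinant) of A equals the radical of the ideal generated by all 3-minors of A, both equal to the radical of ⟨Pf⟩ where Pf = x₁₂·x₃₄ - x₁₃·x₂₄ + x₁₄·x₂₃. -/

import Mathlib

open Matrix MvPolynomial

lemma injective_fin_factor (f : Fin 3 → Fin 4) (hf : Function.Injective f) :
    ∃ (j : Fin 4) (σ : Equiv.Perm (Fin 3)), f = j.succAbove ∘ σ := by
  have hns : ¬ Function.Surjective f := by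
    intro hs
    have := Fintype.card_le_of_surjective f hs
    simp [Fintype.card_fin] at this
  rw [Function.Surjective] at hns
  push_neg at hns
  obtain ⟨j, hj⟩ := hns
  have h : ∀ i, ∃ k, j.succAbove k = f i := fun i =>
    Fin.exists_succAbove_eq (fun h => hj i h)
  choose σ hσ using h
  have hinj : Function.Injective σ := fun a b hab => hf (by rw [← hσ a, ← hσ b, hab])
  refine ⟨j, Equiv.ofBijective σ (Finite.injective_iff_bijective.mp hinj), ?_⟩
  funext i
  simp [Equiv.ofBijective, hσ i]

/-- Variables: 0 ↦ x₁₂, 1 ↦ x₁₃, 2 ↦ x₁₄, 3 ↦ x₂₃, 4 ↦ x₂₄, 5 ↦ x₃₄. -/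
theorem radical_det_eq_radical_three_minors_eq_radical_pfaffian
    {R₀ : Type*} [CommRing R₀] (h2 : IsUnit (2 : R₀))
    (A : Matrix (Fin 4) (Fin 4) (MvPolynomial (Fin 6) R₀))
    (hA : A = !![0, X 0, X 1, X 2;
                 -X 0, 0, X 3, X 4;
                 -X 1, -X 3, 0, X 5;
                 -X 2, -X 4, -X 5, 0])
    (Pf : MvPolynomial (Fin 6) R₀)
    (hPf : Pf = X 0 * X 5 - X 1 * X 4 + X 2 * X 3) :
    (Ideal.span {A.det}).radical =
        (Ideal.span {d : MvPolynomial (Fin 6) R₀ | ∃ r c : Fin 3 → Fin 4,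
          Function.Injective r ∧ Function.Injective c ∧
            d = (A.submatrix r c).det}).radical ∧
      (Ideal.span {A.det}).radical = (Ideal.span {Pf}).radical := by
  have e0 : Fin.succAbove (0:Fin 4) = ![1,2,3] := by decide
  have e1 : Fin.succAbove (1:Fin 4) = ![0,2,3] := by decide
  have e2 : Fin.succAbove (2:Fin 4) = ![0,1,3] := by decide
  have e3 : Fin.succAbove (3:Fin 4) = ![0,1,2] := by decide
  set S : Set (MvPolynomial (Fin 6) R₀) :=
    {d : MvPolynomial (Fin 6) R₀ | ∃ r c : Fin 3 → Fin 4,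
      Function.Injective r ∧ Function.Injective c ∧ d = (A.submatrix r c).det} with hS
  -- det A = Pf ^ 2
  have hdet : A.det = Pf ^ 2 := by
    subst hA hPf
    rw [Matrix.det_succ_row_zero]
    simp [Fin.sum_univ_succ, Matrix.det_fin_three, Fin.succAbove]
    ring
  -- the 16 basic 3-minors
  have key16 : ∀ j k : Fin 4,
      ∃ w, (A.submatrix (Fin.succAbove j) (Fin.succAbove k)).det = Pf * w := by
    intro j k
    subst hA hPf
    fin_cases j <;> fin_cases k <;> simp only [e0, e1, e2, e3]
    · exact ⟨0, by rw [Matrix.det_fin_three]; simp [Matrix.det_fin_three, e0, e1, e2, e3]; try ring⟩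
    · exact ⟨-X 5, by rw [Matrix.det_fin_three]; simp [Matrix.det_fin_three, e0, e1, e2, e3]; try ring⟩
    · exact ⟨-X 4, by rw [Matrix.det_fin_three]; simp [Matrix.det_fin_three, e0, e1, e2, e3]; try ring⟩
    · exact ⟨-X 3, by rw [Matrix.det_fin_three]; simp [Matrix.det_fin_three, e0, e1, e2, e3]; try ring⟩
    · exact ⟨X 5, by rw [Matrix.det_fin_three]; simp [Matrix.det_fin_three, e0, e1, e2, e3]; try ring⟩
    · exact ⟨0, by rw [Matrix.det_fin_three]; simp [Matrix.det_fin_three, e0, e1, e2, e3]; try ring⟩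
    · exact ⟨-X 2, by rw [Matrix.det_fin_three]; simp [Matrix.det_fin_three, e0, e1, e2, e3]; try ring⟩
    · exact ⟨-X 1, by rw [Matrix.det_fin_three]; simp [Matrix.det_fin_three, e0, e1, e2, e3]; try ring⟩
    · exact ⟨X 4, by rw [Matrix.det_fin_three]; simp [Matrix.det_fin_three, e0, e1, e2, e3]; try ring⟩
    · exact ⟨X 2, by rw [Matrix.det_fin_three]; simp [Matrix.det_fin_three, e0, e1, e2, e3]; try ring⟩
    · exact ⟨0, by rw [Matrix.det_fin_three]; simp [Matrix.det_fin_three, e0, e1, e2, e3]; try ring⟩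
    · exact ⟨-X 0, by rw [Matrix.det_fin_three]; simp [Matrix.det_fin_three, e0, e1, e2, e3]; try ring⟩
    · exact ⟨X 3, by rw [Matrix.det_fin_three]; simp [Matrix.det_fin_three, e0, e1, e2, e3]; try ring⟩
    · exact ⟨X 1, by rw [Matrix.det_fin_three]; simp [Matrix.det_fin_three, e0, e1, e2, e3]; try ring⟩
    · exact ⟨X 0, by rw [Matrix.det_fin_three]; simp [Matrix.det_fin_three, e0, e1, e2, e3]; try ring⟩
    · exact ⟨0, by rw [Matrix.det_fin_three]; simp [Matrix.det_fin_three, e0, e1, e2, e3]; try ring⟩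
  -- every 3-minor is divisible by Pf
  have hdvd : ∀ d ∈ S, Pf ∣ d := by
    rintro d ⟨r, c, hr, hc, rfl⟩
    obtain ⟨j, σ, rfl⟩ := injective_fin_factor r hr
    obtain ⟨k, τ, rfl⟩ := injective_fin_factor c hc
    have hsub : A.submatrix (Fin.succAbove j ∘ σ) (Fin.succAbove k ∘ τ)
        = ((A.submatrix (Fin.succAbove j) (Fin.succAbove k)).submatrix σ id).submatrix id τ := by
      ext i l; simp [Matrix.submatrix_apply]
    rw [hsub, Matrix.det_permute', Matrix.det_permute]
    obtain ⟨w, hw⟩ := key16 j k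
    rw [hw]
    exact Dvd.dvd.mul_left (Dvd.dvd.mul_left (Dvd.intro w rfl) _) _
  -- span S ≤ span {Pf}
  have hle : Ideal.span S ≤ Ideal.span {Pf} := by
    rw [Ideal.span_le]
    intro d hd
    rw [SetLike.mem_coe, Ideal.mem_span_singleton]
    exact hdvd d hd
  -- Pf ^ 2 ∈ span S
  have hPf2 : Pf ^ 2 ∈ Ideal.span S := by
    have m1 : Pf * Pf
        = X 0 * ((A.submatrix (Fin.succAbove 1) (Fin.succAbove 0)).det)
          - X 1 * ((A.submatrix (Fin.succAbove 2) (Fin.succAbove 0)).det)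
          + X 2 * ((A.submatrix (Fin.succAbove 3) (Fin.succAbove 0)).det) := by
      subst hA hPf
      rw [Matrix.det_fin_three, Matrix.det_fin_three, Matrix.det_fin_three]
      simp [Matrix.det_fin_three, e0, e1, e2, e3]
      ring
    have mem : ∀ j : Fin 4, (A.submatrix (Fin.succAbove j) (Fin.succAbove 0)).det ∈ Ideal.span S := by
      intro j
      exact Ideal.subset_span ⟨Fin.succAbove j, Fin.succAbove 0,
        Fin.succAbove_right_injective, Fin.succAbove_right_injective, rfl⟩
    have hmm : Pf * Pf ∈ Ideal.span S := by
      rw [m1]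
      exact Ideal.add_mem _ (Ideal.sub_mem _ (Ideal.mul_mem_left _ _ (mem 1))
        (Ideal.mul_mem_left _ _ (mem 2))) (Ideal.mul_mem_left _ _ (mem 3))
    rwa [pow_two]
  -- radical span S = radical span {Pf}
  have hrad : (Ideal.span S).radical = (Ideal.span {Pf}).radical := by
    apply le_antisymm
    · exact Ideal.radical_mono hle
    · rw [Ideal.radical_le_radical_iff, Ideal.span_le]
      rintro x hx
      rw [Set.mem_singleton_iff] at hx
      subst hx
      exact ⟨2, hPf2⟩
  have hdetrad : (Ideal.span {A.det}).radical = (Ideal.span {Pf}).radical := by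
    rw [hdet, ← Ideal.span_singleton_pow, Ideal.radical_pow _ two_ne_zero]
  exact ⟨hdetrad.trans hrad.symm, hdetrad⟩
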